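/- Let G be a finite group, H ≤ Z(G) a central subgroup, and γ : H×H → ℂ^× a 2-cocycle (so the associated 3-cocycle ω is trivial). Then the dimension of the subspace of G-invariant vectors of degree e in L(H,γ)^{⊗n} (the ground-state space Hom_{Z(Vec_G)}(ℂ, L(H,γ)^{⊗n})) equals |G|^{n-1}. Equivalently, with X = R×H as a crossed G-set, every tuple in (X^n)_e = {((r_1,h_1),…,(r_n,h_n)) : h_1h_2⋯h_n = e} is regular and the number of G-orbits in (X^n)_e is |G|^{n-1}. -/

import Mathlib

open scoped BigOperators Classical

noncomputable section

namespace DW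

variable {G X : Type} [Group G] [Fintype G]

/-- `ω(g; f, h) := ω(g,f,h)·ω(^g f, g, h)⁻¹·ω(^g f, ^g h, g)`. -/
def omega1 (ω : G → G → G → ℂˣ) (g f h : G) : ℂˣ :=
  ω g f h * (ω (g * f * g⁻¹) g h)⁻¹ * ω (g * f * g⁻¹) (g * h * g⁻¹) g

/-- `ω(g, g'; h) := ω(g, ^{g'}h, g') / (ω(^{gg'}h, g, g')·ω(g,g',h))`. -/
def omega2 (ω : G → G → G → ℂˣ) (g g' h : G) : ℂˣ :=
  ω g (g' * h * g'⁻¹) g' * (ω ((g * g') * h * (g * g')⁻¹) g g')⁻¹ * (ω g g' h)⁻¹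

/-- The partial product `|x_1||x_2|⋯|x_k|` of the degrees of the first `k`
entries of a tuple. -/
def pparts (d : X → G) {n : ℕ} (x : Fin n → X) (k : ℕ) : G :=
  ((List.ofFn fun j : Fin n => d (x j)).take k).prod

/-- `λ_{X^n}(g; x_1, …, x_n) = (∏ᵢ λ(g;xᵢ)) ∏_{k≥2} ω(g; |x_1|⋯|x_{k-1}|, |x_k|)`. -/
def LamN (ω : G → G → G → ℂˣ) (lam : G → X → ℂˣ) (d : X → G) {n : ℕ}
    (g : G) (x : Fin n → X) : ℂˣ :=
  (∏ i : Fin n, lam g (x i)) *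
    ∏ k : Fin n, if k.1 = 0 then 1 else omega1 ω g (pparts d x k.1) (d (x k))

/-- The linear action of `g ∈ G` on `V^{⊗n}`, modelled on the free vector space
on `X^n`:  `g ▷ v_x = λ_{X^n}(g; x) v_{g·x}`. -/
def rhoL (ω : G → G → G → ℂˣ) (lam : G → X → ℂˣ) (d : X → G) (act : G → X → X)
    {n : ℕ} (g : G) : ((Fin n → X) → ℂ) →ₗ[ℂ] ((Fin n → X) → ℂ) where
  toFun φ := fun y =>
    (LamN ω lam d g (fun i => act g⁻¹ (y i)) : ℂ) * φ (fun i => act g⁻¹ (y i))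
  map_add' φ ψ := by funext y; simp [mul_add]
  map_smul' c φ := by
    funext y
    simp only [Pi.smul_apply, smul_eq_mul, RingHom.id_apply]
    ring

/-- The averaging operator `Av_G = |G|⁻¹ ∑_g (g ▷ ·)` on `V^{⊗n}`. -/
def AvN (ω : G → G → G → ℂˣ) (lam : G → X → ℂˣ) (d : X → G) (act : G → X → X)
    {n : ℕ} : ((Fin n → X) → ℂ) →ₗ[ℂ] ((Fin n → X) → ℂ) :=
  (Fintype.card G : ℂ)⁻¹ • ∑ g : G, rhoL ω lam d act g

/-- The degree-`e` part `V^{⊗n}_e` : functions supported on tuples whose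
degrees multiply to the identity. -/
def degSub (d : X → G) (n : ℕ) : Submodule ℂ ((Fin n → X) → ℂ) where
  carrier := {φ | ∀ x : Fin n → X, pparts d x n ≠ 1 → φ x = 0}
  add_mem' := by
    intro a b ha hb x hx
    have h1 := ha x hx
    have h2 := hb x hx
    simp only [Pi.add_apply, h1, h2, add_zero]
  zero_mem' := by intro x _; rfl
  smul_mem' := by
    intro c a ha x hx
    have h1 := ha x hx
    simp only [Pi.smul_apply, h1, smul_eq_mul, mul_zero]

/-- The space of `G`-invariant vectors in `V^{⊗n}_e`; this is the model of
`Hom_{Z(Vec_G^ω)}(ℂ, V^{⊗n})`. -/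
def invSub (ω : G → G → G → ℂˣ) (lam : G → X → ℂˣ) (d : X → G) (act : G → X → X)
    (n : ℕ) : Submodule ℂ ((Fin n → X) → ℂ) :=
  degSub d n ⊓ ⨅ g : G, LinearMap.eqLocus (rhoL ω lam d act g (n := n)) LinearMap.id

/-- A tuple `x ∈ (X^n)_e` is regular if `λ_{X^n}(g; x) = 1` for every `g` in the
common stabilizer of its entries. -/
def RegT (ω : G → G → G → ℂˣ) (lam : G → X → ℂˣ) (d : X → G) (act : G → X → X)
    {n : ℕ} (x : Fin n → X) : Prop :=
  pparts d x n = 1 ∧ ∀ g : G, (∀ i, act g (x i) = x i) → LamN ω lam d g x = 1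

/-- The basis vector `v_{x_1} ⊗ ⋯ ⊗ v_{x_n}` of the model of `V^{⊗n}`. -/
def deltaF {n : ℕ} (x : Fin n → X) : (Fin n → X) → ℂ :=
  fun y => if y = x then 1 else 0

/-- The underlying tuple map of the braid generator:
`σ_i(x) = (x_1, …, x_{i-1}, |x_i|·x_{i+1}, x_i, x_{i+2}, …, x_n)` (0-indexed). -/
def sigmaTuple (d : X → G) (act : G → X → X) {n : ℕ} (i : ℕ) (hi : i + 1 < n)
    (x : Fin n → X) : Fin n → X :=
  fun j =>
    if j.1 = i then act (d (x ⟨i, Nat.lt_of_succ_lt hi⟩)) (x ⟨i + 1, hi⟩)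
    else if j.1 = i + 1 then x ⟨i, Nat.lt_of_succ_lt hi⟩
    else x j

/-- The inverse of `sigmaTuple`. -/
def sigmaInvTuple (d : X → G) (act : G → X → X) {n : ℕ} (i : ℕ) (hi : i + 1 < n)
    (y : Fin n → X) : Fin n → X :=
  fun j =>
    if j.1 = i then y ⟨i + 1, hi⟩
    else if j.1 = i + 1 then act (d (y ⟨i + 1, hi⟩))⁻¹ (y ⟨i, Nat.lt_of_succ_lt hi⟩)
    else y j

/-- The scalar appearing in the action of the braid generator `σ_i'` on a basis
vector: `ω(|x_1|⋯|x_{i-1}|, |x_{i+1}|, |x_i|)⁻¹ λ(|x_i|; x_{i+1}) ω(|x_1|⋯|x_{i-1}|, |x_i|, |x_{i+1}|)`. -/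
def braidCoef (ω : G → G → G → ℂˣ) (lam : G → X → ℂˣ) (d : X → G) {n : ℕ}
    (i : ℕ) (hi : i + 1 < n) (x : Fin n → X) : ℂˣ :=
  (ω (pparts d x i) (d (x ⟨i + 1, hi⟩)) (d (x ⟨i, Nat.lt_of_succ_lt hi⟩)))⁻¹ *
    lam (d (x ⟨i, Nat.lt_of_succ_lt hi⟩)) (x ⟨i + 1, hi⟩) *
    ω (pparts d x i) (d (x ⟨i, Nat.lt_of_succ_lt hi⟩)) (d (x ⟨i + 1, hi⟩))

/-- The braid operator `σ_i'` on the model of `V^{⊗n}`, determined by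
`σ_i'(v_x) = braidCoef(x) • v_{σ_i(x)}`. -/
def sigmaOp (ω : G → G → G → ℂˣ) (lam : G → X → ℂˣ) (d : X → G) (act : G → X → X)
    {n : ℕ} (i : ℕ) (hi : i + 1 < n) :
    ((Fin n → X) → ℂ) →ₗ[ℂ] ((Fin n → X) → ℂ) where
  toFun φ := fun y =>
    (braidCoef ω lam d i hi (sigmaInvTuple d act i hi y) : ℂ) *
      φ (sigmaInvTuple d act i hi y)
  map_add' φ ψ := by funext y; simp [mul_add]
  map_smul' c φ := by
    funext y
    simp only [Pi.smul_apply, smul_eq_mul, RingHom.id_apply]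
    ring

/-- The orbit relation on tuples for the (entrywise) `G`-action. -/
def tupleOrbRel (act : G → X → X) {n : ℕ} (x y : Fin n → X) : Prop :=
  ∃ g : G, (fun i => act g (x i)) = y

end DW

namespace DW

variable {G : Type} [Group G] [Fintype G]

/-- `ε(h₁, h₂) := γ(h₁,h₂) / γ(^{h₁}h₂, h₁)`. -/
def epsilon (γ : G → G → ℂˣ) (a b : G) : ℂˣ :=
  γ a b * (γ (a * b * a⁻¹) a)⁻¹

/-- The underlying set `R × H` of the crossed `G`-set `G ×_H H` indexing the
monomial basis of the Lagrangian algebra `L(H,γ)`. -/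
abbrev Xp (R : Set G) (H : Subgroup G) : Type := R × H

/-- The grading `|(r,h)| = rhr⁻¹` on `R × H`. -/
def dRH (R : Set G) (H : Subgroup G) : Xp R H → G :=
  fun p => (p.1 : G) * (p.2 : G) * (p.1 : G)⁻¹

/-- The `G`-action `g · (r,h) = (g▷r, ^{κ(g,r)}h)` on `R × H`. -/
def actRH (R : Set G) (H : Subgroup G) (ar kap : G → G → G)
    (har : ∀ g r : G, r ∈ R → ar g r ∈ R)
    (hkap : ∀ g r : G, r ∈ R → kap g r ∈ H) :
    G → Xp R H → Xp R H :=
  fun g p =>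
    (⟨ar g (p.1 : G), har g (p.1 : G) p.1.2⟩,
     ⟨kap g (p.1 : G) * (p.2 : G) * (kap g (p.1 : G))⁻¹,
      mul_mem (mul_mem (hkap g (p.1 : G) p.1.2) p.2.2)
        (inv_mem (hkap g (p.1 : G) p.1.2))⟩)

/-- The twisted monomial structure of the Lagrangian algebra `L(H,γ)` on the
crossed `G`-set `R × H`:
`λ(g;r,h) = ω((gr)⁻¹, g⁻¹; ^r h) · ω(κ(g,r), (gr)⁻¹; ^{gr}h) · ε(κ(g,r), h)`. -/
def lamRH (ω : G → G → G → ℂˣ) (γ : G → G → ℂˣ) (R : Set G) (H : Subgroup G)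
    (kap : G → G → G) : G → Xp R H → ℂˣ :=
  fun g p =>
    omega2 ω (g * (p.1 : G))⁻¹ g⁻¹ ((p.1 : G) * (p.2 : G) * (p.1 : G)⁻¹) *
    omega2 ω (kap g (p.1 : G)) (g * (p.1 : G))⁻¹
      ((g * (p.1 : G)) * (p.2 : G) * (g * (p.1 : G))⁻¹) *
    epsilon γ (kap g (p.1 : G)) (p.2 : G)

end DW

namespace DW

section Aux
set_option linter.unusedSectionVars false

variable {G : Type} [Group G] [Fintype G]

structure Setup (γ : G → G → ℂˣ) (H : Subgroup G) (R : Set G) (ar kap : G → G → G) : Prop where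
  hcen : H ≤ Subgroup.center G
  hγ : ∀ a b c : G, a ∈ H → b ∈ H → c ∈ H → γ (a * b) c * γ a b = γ a (b * c) * γ b c
  hRrep : ∀ g : G, ∃! r : G, r ∈ R ∧ g⁻¹ * r ∈ H
  heR : (1 : G) ∈ R
  har : ∀ g r : G, r ∈ R → ar g r ∈ R
  hkap : ∀ g r : G, r ∈ R → kap g r ∈ H
  hfact : ∀ g r : G, r ∈ R → g * r = ar g r * kap g r

variable {γ : G → G → ℂˣ} {H : Subgroup G} {R : Set G} {ar kap : G → G → G}

namespace Setup

lemma comm (S : Setup γ H R ar kap) {h : G} (hh : h ∈ H) (g : G) : g * h = h * g :=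
  Subgroup.mem_center_iff.mp (S.hcen hh) g

lemma rep_unique (S : Setup γ H R ar kap) {g r s : G} (hr : r ∈ R) (hgr : g⁻¹ * r ∈ H)
    (hs : s ∈ R) (hgs : g⁻¹ * s ∈ H) : r = s := by
  obtain ⟨t, -, hu⟩ := S.hRrep g
  rw [hu r ⟨hr, hgr⟩, hu s ⟨hs, hgs⟩]

lemma ar_eq (S : Setup γ H R ar kap) {g r s : G} (hr : r ∈ R) (hs : s ∈ R)
    (hgs : (g * r)⁻¹ * s ∈ H) : ar g r = s := by
  apply S.rep_unique (g := g * r) (S.har g r hr) ?_ hs hgs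
  have h : (g * r)⁻¹ * ar g r = (kap g r)⁻¹ := by
    rw [S.hfact g r hr]; group
  rw [h]; exact inv_mem (S.hkap g r hr)

lemma ar_one (S : Setup γ H R ar kap) {r : G} (hr : r ∈ R) : ar 1 r = r :=
  S.ar_eq hr hr (by simpa using H.one_mem)

lemma kap_one (S : Setup γ H R ar kap) {r : G} (hr : r ∈ R) : kap 1 r = 1 := by
  have h := S.hfact 1 r hr
  rw [S.ar_one hr, one_mul] at h
  have : r * 1 = r * kap 1 r := by rw [mul_one]; exact h
  exact (mul_left_cancel this).symm

lemma ar_mul (S : Setup γ H R ar kap) (g g' r : G) (hr : r ∈ R) :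
    ar (g * g') r = ar g (ar g' r) := by
  have key : g * g' * r = ar g (ar g' r) * (kap g (ar g' r) * kap g' r) := by
    rw [mul_assoc, S.hfact g' r hr, ← mul_assoc, S.hfact g (ar g' r) (S.har g' r hr), mul_assoc]
  apply S.ar_eq hr (S.har g _ (S.har g' r hr))
  rw [key]
  have h2 : (ar g (ar g' r) * (kap g (ar g' r) * kap g' r))⁻¹ * ar g (ar g' r)
      = (kap g (ar g' r) * kap g' r)⁻¹ := by group
  rw [h2]
  exact inv_mem (mul_mem (S.hkap g _ (S.har g' r hr)) (S.hkap g' r hr))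

lemma kap_mul (S : Setup γ H R ar kap) (g g' r : G) (hr : r ∈ R) :
    kap (g * g') r = kap g (ar g' r) * kap g' r := by
  have key : g * g' * r = ar g (ar g' r) * (kap g (ar g' r) * kap g' r) := by
    rw [mul_assoc, S.hfact g' r hr, ← mul_assoc, S.hfact g (ar g' r) (S.har g' r hr), mul_assoc]
  have h3 := S.hfact (g * g') r hr
  rw [S.ar_mul g g' r hr] at h3
  exact mul_left_cancel (h3.symm.trans key)

lemma ar_H (S : Setup γ H R ar kap) {h r : G} (hh : h ∈ H) (hr : r ∈ R) : ar h r = r := by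
  apply S.ar_eq hr hr
  have e : (h * r)⁻¹ * r = h⁻¹ := by
    rw [← S.comm hh r, mul_inv_rev, inv_mul_cancel_right]
  rw [e]; exact inv_mem hh

lemma kap_H (S : Setup γ H R ar kap) {h r : G} (hh : h ∈ H) (hr : r ∈ R) : kap h r = h := by
  have h1 := S.hfact h r hr
  rw [S.ar_H hh hr, ← S.comm hh r] at h1
  exact (mul_left_cancel h1).symm

lemma mem_H_of_fix (S : Setup γ H R ar kap) {g r : G} (hr : r ∈ R) (hfix : ar g r = r) :
    g = kap g r ∧ g ∈ H := by
  have h1 := S.hfact g r hr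
  rw [hfix, S.comm (S.hkap g r hr) r] at h1
  have h2 : g = kap g r := mul_right_cancel h1
  exact ⟨h2, h2 ▸ S.hkap g r hr⟩

lemma ar_inv_self (S : Setup γ H R ar kap) {r : G} (hr : r ∈ R) : ar r⁻¹ r = 1 :=
  S.ar_eq hr S.heR (by simpa using H.one_mem)

lemma eps_eq (S : Setup γ H R ar kap) {a : G} (ha : a ∈ H) (b : G) :
    epsilon γ a b = γ a b * (γ b a)⁻¹ := by
  have e : a * b * a⁻¹ = b := by rw [← S.comm ha b, mul_inv_cancel_right]
  rw [epsilon, e]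

lemma gamma_one_left (S : Setup γ H R ar kap) {c : G} (hc : c ∈ H) : γ 1 c = γ 1 1 := by
  have h := S.hγ 1 1 c H.one_mem H.one_mem hc
  simp only [one_mul] at h
  exact (mul_left_cancel h).symm

lemma gamma_one_right (S : Setup γ H R ar kap) {a : G} (ha : a ∈ H) : γ a 1 = γ 1 1 := by
  have h := S.hγ a 1 1 ha H.one_mem H.one_mem
  simp only [mul_one, one_mul] at h
  exact mul_left_cancel h

lemma eps_one_right (S : Setup γ H R ar kap) {a : G} (ha : a ∈ H) : epsilon γ a 1 = 1 := by
  rw [S.eps_eq ha, S.gamma_one_right ha, S.gamma_one_left ha, mul_inv_cancel]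

lemma eps_one_left (S : Setup γ H R ar kap) {b : G} (hb : b ∈ H) : epsilon γ 1 b = 1 := by
  rw [S.eps_eq H.one_mem, S.gamma_one_left hb, S.gamma_one_right hb, mul_inv_cancel]

lemma eps_mul_right (S : Setup γ H R ar kap) {a b c : G} (ha : a ∈ H) (hb : b ∈ H)
    (hc : c ∈ H) : epsilon γ a (b * c) = epsilon γ a b * epsilon γ a c := by
  have h1 := S.hγ a b c ha hb hc
  have h2 := S.hγ b a c hb ha hc
  have h3 := S.hγ b c a hb hc ha
  have hab : a * b = b * a := S.comm hb a
  have hac : a * c = c * a := S.comm hc a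
  rw [hab] at h1
  rw [← hac] at h3
  rw [S.eps_eq ha, S.eps_eq ha, S.eps_eq ha]
  rw [Units.ext_iff]
  simp only [Units.val_mul, Units.val_inv_eq_inv_val]
  have h1' := congrArg Units.val h1
  have h2' := congrArg Units.val h2
  have h3' := congrArg Units.val h3
  simp only [Units.val_mul] at h1' h2' h3'
  have hK : (γ a (b*c) : ℂ) * γ b a * γ c a * γ b c = (γ (b*c) a : ℂ) * γ a b * γ a c * γ b c := by
    linear_combination (-((γ b a : ℂ) * (γ c a : ℂ))) * h1' - ((γ a b : ℂ) * (γ a c : ℂ)) * h3'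
      + ((γ a b : ℂ) * (γ c a : ℂ)) * h2'
  have hK' : (γ a (b*c) : ℂ) * γ b a * γ c a = (γ (b*c) a : ℂ) * γ a b * γ a c :=
    mul_right_cancel₀ (Units.ne_zero _) hK
  field_simp
  linear_combination hK'

lemma eps_inv (S : Setup γ H R ar kap) {a b : G} (ha : a ∈ H) (hb : b ∈ H) :
    epsilon γ a b = (epsilon γ b a)⁻¹ := by
  rw [S.eps_eq ha, S.eps_eq hb]; group

lemma eps_mul_left (S : Setup γ H R ar kap) {a b c : G} (ha : a ∈ H) (hb : b ∈ H)
    (hc : c ∈ H) : epsilon γ (a * b) c = epsilon γ a c * epsilon γ b c := by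
  rw [S.eps_inv (mul_mem ha hb) hc, S.eps_mul_right hc ha hb, mul_inv,
    ← S.eps_inv ha hc, ← S.eps_inv hb hc]

lemma eps_list_prod (S : Setup γ H R ar kap) {a : G} (ha : a ∈ H) :
    ∀ l : List G, (∀ b ∈ l, b ∈ H) → epsilon γ a l.prod = (l.map (epsilon γ a)).prod := by
  intro l
  induction l with
  | nil => intro _; simpa using S.eps_one_right ha
  | cons b t ih =>
    intro hmem
    have hb : b ∈ H := hmem b List.mem_cons_self
    have ht : ∀ x ∈ t, x ∈ H := fun x hx => hmem x (List.mem_cons_of_mem b hx)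
    have htp : t.prod ∈ H := list_prod_mem ht
    rw [List.prod_cons, S.eps_mul_right ha hb htp, List.map_cons, List.prod_cons, ih ht]

end Setup

lemma LamN_triv {X : Type} (lam : G → X → ℂˣ) (d : X → G) {n : ℕ} (g : G) (x : Fin n → X) :
    LamN (fun _ _ _ => (1 : ℂˣ)) lam d g x = ∏ i : Fin n, lam g (x i) := by
  simp [LamN, omega1]

namespace Setup

variable (harv : ∀ g r : G, r ∈ R → ar g r ∈ R) (hkapv : ∀ g r : G, r ∈ R → kap g r ∈ H)

lemma act_fst (S : Setup γ H R ar kap) (g : G) (p : Xp R H) :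
    ((actRH R H ar kap harv hkapv g p).1 : G) = ar g (p.1 : G) := rfl

lemma act_snd (S : Setup γ H R ar kap) (g : G) (p : Xp R H) :
    (actRH R H ar kap harv hkapv g p).2 = p.2 := by
  apply Subtype.ext
  show kap g (p.1 : G) * (p.2 : G) * (kap g (p.1 : G))⁻¹ = (p.2 : G)
  rw [← S.comm (hkapv g (p.1 : G) p.1.2) (p.2 : G), mul_inv_cancel_right]

lemma act_one (S : Setup γ H R ar kap) (p : Xp R H) :
    actRH R H ar kap harv hkapv 1 p = p := by
  apply Prod.ext
  · exact Subtype.ext (S.ar_one p.1.2)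
  · exact S.act_snd harv hkapv 1 p

lemma act_mul (S : Setup γ H R ar kap) (g g' : G) (p : Xp R H) :
    actRH R H ar kap harv hkapv g (actRH R H ar kap harv hkapv g' p)
      = actRH R H ar kap harv hkapv (g * g') p := by
  apply Prod.ext
  · exact Subtype.ext (S.ar_mul g g' (p.1 : G) p.1.2).symm
  · rw [S.act_snd harv hkapv, S.act_snd harv hkapv, S.act_snd harv hkapv]

lemma act_H (S : Setup γ H R ar kap) {h : G} (hh : h ∈ H) (p : Xp R H) :
    actRH R H ar kap harv hkapv h p = p := by
  apply Prod.ext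
  · exact Subtype.ext (S.ar_H hh p.1.2)
  · exact S.act_snd harv hkapv h p

lemma d_eq (S : Setup γ H R ar kap) (p : Xp R H) : dRH R H p = (p.2 : G) := by
  show (p.1 : G) * (p.2 : G) * (p.1 : G)⁻¹ = (p.2 : G)
  rw [S.comm p.2.2 (p.1 : G), mul_inv_cancel_right]

lemma pparts_top (S : Setup γ H R ar kap) {n : ℕ} (x : Fin n → Xp R H) :
    pparts (dRH R H) x n = (List.ofFn fun i => ((x i).2 : G)).prod := by
  unfold pparts
  rw [List.take_of_length_le (le_of_eq List.length_ofFn)]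
  have e : (fun j : Fin n => dRH R H (x j)) = fun i : Fin n => ((x i).2 : G) :=
    funext fun j => S.d_eq (x j)
  rw [e]

lemma pparts_act (S : Setup γ H R ar kap) {n : ℕ} (g : G) (x : Fin n → Xp R H) :
    pparts (dRH R H) (fun i => actRH R H ar kap harv hkapv g (x i)) n
      = pparts (dRH R H) x n := by
  rw [S.pparts_top, S.pparts_top]
  have e : (fun i : Fin n => ((actRH R H ar kap harv hkapv g (x i)).2 : G))
      = fun i : Fin n => ((x i).2 : G) := by
    funext j; rw [S.act_snd harv hkapv]
  rw [e]

lemma lam_eq (S : Setup γ H R ar kap) (g : G) (p : Xp R H) :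
    lamRH (fun _ _ _ => (1 : ℂˣ)) γ R H kap g p = epsilon γ (kap g (p.1 : G)) (p.2 : G) := by
  simp [lamRH, omega2]

lemma lam_cocycle (S : Setup γ H R ar kap) (g g' : G) (p : Xp R H) :
    lamRH (fun _ _ _ => (1 : ℂˣ)) γ R H kap (g * g') p
      = lamRH (fun _ _ _ => (1 : ℂˣ)) γ R H kap g (actRH R H ar kap harv hkapv g' p)
        * lamRH (fun _ _ _ => (1 : ℂˣ)) γ R H kap g' p := by
  rw [S.lam_eq, S.lam_eq, S.lam_eq, S.act_snd harv hkapv, S.act_fst harv hkapv,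
    S.kap_mul g g' (p.1 : G) p.1.2]
  exact S.eps_mul_left (S.hkap g _ (S.har g' _ p.1.2)) (S.hkap g' _ p.1.2) p.2.2

lemma LamN_cocycle (S : Setup γ H R ar kap) {n : ℕ} (g g' : G) (x : Fin n → Xp R H) :
    LamN (fun _ _ _ => (1 : ℂˣ)) (lamRH (fun _ _ _ => (1 : ℂˣ)) γ R H kap) (dRH R H)
        (g * g') x
      = LamN (fun _ _ _ => (1 : ℂˣ)) (lamRH (fun _ _ _ => (1 : ℂˣ)) γ R H kap) (dRH R H)
          g (fun i => actRH R H ar kap harv hkapv g' (x i))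
        * LamN (fun _ _ _ => (1 : ℂˣ)) (lamRH (fun _ _ _ => (1 : ℂˣ)) γ R H kap) (dRH R H)
          g' x := by
  rw [LamN_triv, LamN_triv, LamN_triv, ← Finset.prod_mul_distrib]
  exact Finset.prod_congr rfl fun i _ => S.lam_cocycle harv hkapv g g' (x i)

include harv hkapv in
lemma LamN_one (S : Setup γ H R ar kap) {n : ℕ} (x : Fin n → Xp R H) :
    LamN (fun _ _ _ => (1 : ℂˣ)) (lamRH (fun _ _ _ => (1 : ℂˣ)) γ R H kap) (dRH R H)
      1 x = 1 := by
  have h := S.LamN_cocycle harv hkapv 1 1 x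
  rw [one_mul] at h
  have hx : (fun i => actRH R H ar kap harv hkapv 1 (x i)) = x := by
    funext i; exact S.act_one harv hkapv (x i)
  rw [hx] at h
  have h2 : LamN (fun _ _ _ => (1 : ℂˣ)) (lamRH (fun _ _ _ => (1 : ℂˣ)) γ R H kap)
      (dRH R H) 1 x * 1 = LamN (fun _ _ _ => (1 : ℂˣ))
      (lamRH (fun _ _ _ => (1 : ℂˣ)) γ R H kap) (dRH R H) 1 x
      * LamN (fun _ _ _ => (1 : ℂˣ)) (lamRH (fun _ _ _ => (1 : ℂˣ)) γ R H kap)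
        (dRH R H) 1 x := by rw [mul_one]; exact h
  exact (mul_left_cancel h2).symm

lemma regular (S : Setup γ H R ar kap) {n : ℕ} (hn : 0 < n) (x : Fin n → Xp R H)
    (hdeg : pparts (dRH R H) x n = 1) :
    RegT (fun _ _ _ => (1 : ℂˣ)) (lamRH (fun _ _ _ => (1 : ℂˣ)) γ R H kap) (dRH R H)
      (actRH R H ar kap harv hkapv) x := by
  refine ⟨hdeg, ?_⟩
  intro g hg
  have hfix0 : ar g ((x ⟨0, hn⟩).1 : G) = ((x ⟨0, hn⟩).1 : G) :=
    congrArg (fun p : Xp R H => (p.1 : G)) (hg ⟨0, hn⟩)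
  obtain ⟨-, hgH⟩ := S.mem_H_of_fix (x ⟨0, hn⟩).1.2 hfix0
  rw [LamN_triv]
  have hterm : ∀ i : Fin n, lamRH (fun _ _ _ => (1 : ℂˣ)) γ R H kap g (x i)
      = epsilon γ g ((x i).2 : G) := by
    intro i
    have hfix : ar g ((x i).1 : G) = ((x i).1 : G) :=
      congrArg (fun p : Xp R H => (p.1 : G)) (hg i)
    rw [S.lam_eq, ← (S.mem_H_of_fix (x i).1.2 hfix).1]
  rw [Finset.prod_congr rfl fun i _ => hterm i]
  have hmem : ∀ b ∈ (List.ofFn fun i => ((x i).2 : G)), b ∈ H := by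
    intro b hb
    rw [List.mem_ofFn] at hb
    obtain ⟨i, rfl⟩ := hb
    exact (x i).2.2
  have hp : ∏ i : Fin n, epsilon γ g ((x i).2 : G) = epsilon γ g (pparts (dRH R H) x n) := by
    rw [S.pparts_top, S.eps_list_prod hgH _ hmem, List.map_ofFn, List.prod_ofFn]
    rfl
  rw [hp, hdeg, S.eps_one_right hgH]
end Setup

section Canon

variable (harv : ∀ g r : G, r ∈ R → ar g r ∈ R) (hkapv : ∀ g r : G, r ∈ R → kap g r ∈ H)

/-- Canonical form of a tuple: translate so that the first coset representative is `1`. -/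
def Nmap {n : ℕ} (hn : 0 < n) (x : Fin n → Xp R H) : Fin n → Xp R H :=
  fun i => actRH R H ar kap harv hkapv (((x ⟨0, hn⟩).1 : G))⁻¹ (x i)

lemma Nmap_fix (S : Setup γ H R ar kap) {n : ℕ} (hn : 0 < n) (x : Fin n → Xp R H)
    (h1 : ((x ⟨0, hn⟩).1 : G) = 1) : Nmap harv hkapv hn x = x := by
  funext i
  show actRH R H ar kap harv hkapv (((x ⟨0, hn⟩).1 : G))⁻¹ (x i) = x i
  rw [h1, inv_one]
  exact S.act_one harv hkapv (x i)

lemma Nmap_canon (S : Setup γ H R ar kap) {n : ℕ} (hn : 0 < n) (x : Fin n → Xp R H) :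
    ((Nmap harv hkapv hn x ⟨0, hn⟩).1 : G) = 1 :=
  S.ar_inv_self (x ⟨0, hn⟩).1.2

lemma Nmap_idem (S : Setup γ H R ar kap) {n : ℕ} (hn : 0 < n) (x : Fin n → Xp R H) :
    Nmap harv hkapv hn (Nmap harv hkapv hn x) = Nmap harv hkapv hn x :=
  Nmap_fix harv hkapv S hn _ (Nmap_canon harv hkapv S hn x)

lemma Nmap_pparts (S : Setup γ H R ar kap) {n : ℕ} (hn : 0 < n) (x : Fin n → Xp R H) :
    pparts (dRH R H) (Nmap harv hkapv hn x) n = pparts (dRH R H) x n :=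
  S.pparts_act harv hkapv _ x

lemma Nmap_act (S : Setup γ H R ar kap) {n : ℕ} (hn : 0 < n) (g : G) (x : Fin n → Xp R H) :
    Nmap harv hkapv hn (fun i => actRH R H ar kap harv hkapv g (x i))
      = Nmap harv hkapv hn x := by
  funext i
  set r1 : G := ((x ⟨0, hn⟩).1 : G) with hr1def
  have hr1 : r1 ∈ R := (x ⟨0, hn⟩).1.2
  show actRH R H ar kap harv hkapv (ar g r1)⁻¹ (actRH R H ar kap harv hkapv g (x i))
      = actRH R H ar kap harv hkapv r1⁻¹ (x i)
  rw [S.act_mul harv hkapv]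
  have h := S.hfact g r1 hr1
  have key : (ar g r1)⁻¹ * g = kap g r1 * r1⁻¹ := by
    calc (ar g r1)⁻¹ * g = (ar g r1)⁻¹ * (g * r1) * r1⁻¹ := by group
    _ = (ar g r1)⁻¹ * (ar g r1 * kap g r1) * r1⁻¹ := by rw [h]
    _ = kap g r1 * r1⁻¹ := by group
  rw [key, ← S.act_mul harv hkapv, S.act_H harv hkapv (S.hkap g r1 hr1)]

/-- The coefficient relating the value of an invariant vector at `y` to its value at the
canonical form of `y`. -/
def cF {n : ℕ} (hn : 0 < n) (y : Fin n → Xp R H) : ℂˣ :=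
  LamN (fun _ _ _ => (1 : ℂˣ)) (lamRH (fun _ _ _ => (1 : ℂˣ)) γ R H kap) (dRH R H)
    ((y ⟨0, hn⟩).1 : G) (Nmap harv hkapv hn y)

lemma inv_val (S : Setup γ H R ar kap) {n : ℕ} (hn : 0 < n) (φ : (Fin n → Xp R H) → ℂ)
    (hφ : ∀ g : G, rhoL (fun _ _ _ => (1 : ℂˣ)) (lamRH (fun _ _ _ => (1 : ℂˣ)) γ R H kap)
      (dRH R H) (actRH R H ar kap harv hkapv) g φ = φ) (y : Fin n → Xp R H) :
    φ y = (cF (γ := γ) harv hkapv hn y : ℂ) * φ (Nmap harv hkapv hn y) := by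
  have h := congrFun (hφ ((y ⟨0, hn⟩).1 : G)) y
  exact h.symm

lemma cF_rel (S : Setup γ H R ar kap) {n : ℕ} (hn : 0 < n) (g : G) (y : Fin n → Xp R H)
    (hdeg : pparts (dRH R H) y n = 1) :
    LamN (fun _ _ _ => (1 : ℂˣ)) (lamRH (fun _ _ _ => (1 : ℂˣ)) γ R H kap) (dRH R H) g
        (fun i => actRH R H ar kap harv hkapv g⁻¹ (y i))
      * cF (γ := γ) harv hkapv hn (fun i => actRH R H ar kap harv hkapv g⁻¹ (y i))
      = cF (γ := γ) harv hkapv hn y := by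
  set z : Fin n → Xp R H := fun i => actRH R H ar kap harv hkapv g⁻¹ (y i) with hz
  have hw : Nmap harv hkapv hn z = Nmap harv hkapv hn y :=
    Nmap_act harv hkapv S hn g⁻¹ y
  set w : Fin n → Xp R H := Nmap harv hkapv hn z with hwdef
  set a : G := ((y ⟨0, hn⟩).1 : G) with ha
  set b : G := ((z ⟨0, hn⟩).1 : G) with hb
  have hzw : (fun i => actRH R H ar kap harv hkapv b (w i)) = z := by
    funext i
    show actRH R H ar kap harv hkapv b (actRH R H ar kap harv hkapv b⁻¹ (z i)) = z i
    rw [S.act_mul harv hkapv, mul_inv_cancel]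
    exact S.act_one harv hkapv (z i)
  have hwy : ∀ i, w i = actRH R H ar kap harv hkapv a⁻¹ (y i) := by
    intro i
    rw [hw]
    rfl
  have hgz : ∀ i, actRH R H ar kap harv hkapv g (z i) = y i := by
    intro i
    show actRH R H ar kap harv hkapv g (actRH R H ar kap harv hkapv g⁻¹ (y i)) = y i
    rw [S.act_mul harv hkapv, mul_inv_cancel]
    exact S.act_one harv hkapv (y i)
  have hs : ∀ i, actRH R H ar kap harv hkapv (a⁻¹ * (g * b)) (w i) = w i := by
    intro i
    rw [← S.act_mul harv hkapv, ← S.act_mul harv hkapv, congrFun hzw i, hgz i, ← hwy i]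
  have hwdeg : pparts (dRH R H) w n = 1 := by
    rw [hwdef, Nmap_pparts harv hkapv S hn z]
    rw [show pparts (dRH R H) z n = pparts (dRH R H) y n from S.pparts_act harv hkapv g⁻¹ y]
    exact hdeg
  have hreg := (S.regular harv hkapv hn w hwdeg).2 (a⁻¹ * (g * b)) hs
  have hcoc1 := S.LamN_cocycle harv hkapv g b w
  rw [hzw] at hcoc1
  have hcoc2 := S.LamN_cocycle harv hkapv a (a⁻¹ * (g * b)) w
  rw [show (fun i => actRH R H ar kap harv hkapv (a⁻¹ * (g * b)) (w i)) = w from funext hs,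
    hreg, mul_one] at hcoc2
  have hab : a * (a⁻¹ * (g * b)) = g * b := by group
  rw [hab] at hcoc2
  have hcfz : cF (γ := γ) harv hkapv hn z
      = LamN (fun _ _ _ => (1 : ℂˣ)) (lamRH (fun _ _ _ => (1 : ℂˣ)) γ R H kap) (dRH R H) b w
    := rfl
  have hcfy : cF (γ := γ) harv hkapv hn y
      = LamN (fun _ _ _ => (1 : ℂˣ)) (lamRH (fun _ _ _ => (1 : ℂˣ)) γ R H kap) (dRH R H) a
        (Nmap harv hkapv hn y) := rfl
  rw [hcfz, hcfy, ← hw, ← hcoc1, hcoc2]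

/-- Canonical tuples of degree `e`. -/
def CanSet {n : ℕ} (R : Set G) (H : Subgroup G) (hn : 0 < n) : Type :=
  {x : Fin n → Xp R H // ((x ⟨0, hn⟩).1 : G) = 1 ∧ pparts (dRH R H) x n = 1}

def hprod {m : ℕ} (v : Fin m → Xp R H) : ↥H :=
  ⟨(List.ofFn fun j => ((v j).2 : G)).prod, list_prod_mem (by
    intro b hb
    rw [List.mem_ofFn] at hb
    obtain ⟨j, rfl⟩ := hb
    exact (v j).2.2)⟩

def canInv {m : ℕ} (heR : (1 : G) ∈ R) (v : Fin m → Xp R H) : Fin (m + 1) → Xp R H :=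
  fun i => ((Fin.cons (⟨1, heR⟩ : ↥R) (fun j => (v j).1) : Fin (m + 1) → ↥R) i,
            (Fin.snoc (fun j => (v j).2) (hprod v)⁻¹ : Fin (m + 1) → ↥H) i)

lemma canInv_mem (S : Setup γ H R ar kap) {m : ℕ} (v : Fin m → Xp R H) (hn : 0 < m + 1) :
    ((canInv S.heR v ⟨0, hn⟩).1 : G) = 1 ∧ pparts (dRH R H) (canInv S.heR v) (m + 1) = 1 := by
  constructor
  · have h0 : (⟨0, hn⟩ : Fin (m + 1)) = 0 := rfl
    rw [h0]
    simp only [canInv, Fin.cons_zero]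
  · rw [S.pparts_top, List.ofFn_succ']
    simp only [canInv, Fin.snoc_castSucc, Fin.snoc_last, List.prod_concat,
      InvMemClass.coe_inv, hprod]
    exact mul_inv_cancel _

def canEquiv (S : Setup γ H R ar kap) (m : ℕ) (hn : 0 < m + 1) :
    CanSet (R := R) (H := H) hn ≃ (Fin m → Xp R H) where
  toFun x := fun j => ((x.1 j.succ).1, (x.1 j.castSucc).2)
  invFun v := ⟨canInv S.heR v, canInv_mem S v hn⟩
  left_inv := by
    rintro ⟨x, hx1, hx2⟩
    apply Subtype.ext
    funext i
    apply Prod.ext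
    · refine Fin.cases ?_ (fun j => ?_) i
      · simp only [canInv, Fin.cons_zero]
        exact (Subtype.ext hx1).symm
      · simp only [canInv, Fin.cons_succ]
    · refine Fin.lastCases ?_ (fun j => ?_) i
      · simp only [canInv, Fin.snoc_last]
        apply Subtype.ext
        rw [S.pparts_top, List.ofFn_succ', List.prod_concat] at hx2
        have hkey := inv_eq_of_mul_eq_one_right hx2
        simp only [hprod, InvMemClass.coe_inv]
        exact hkey
      · simp only [canInv, Fin.snoc_castSucc]
  right_inv := by
    intro v
    funext j
    apply Prod.ext
    · simp only [canInv, Fin.cons_succ]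
    · simp only [canInv, Fin.snoc_castSucc]

lemma card_Xp (S : Setup γ H R ar kap) : Nat.card (Xp R H) = Fintype.card G := by
  have hbij : Function.Bijective (fun p : Xp R H => (p.1 : G) * (p.2 : G)) := by
    constructor
    · rintro ⟨r, h⟩ ⟨r', h'⟩ heq
      simp only at heq
      have hr : ((r : G) * (h : G))⁻¹ * (r : G) ∈ H := by
        have : ((r : G) * (h : G))⁻¹ * (r : G) = (h : G)⁻¹ := by group
        rw [this]; exact inv_mem h.2
      have hr' : ((r : G) * (h : G))⁻¹ * (r' : G) ∈ H := by
        rw [heq]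
        have : ((r' : G) * (h' : G))⁻¹ * (r' : G) = (h' : G)⁻¹ := by group
        rw [this]; exact inv_mem h'.2
      have hrr : (r : G) = (r' : G) := S.rep_unique r.2 hr r'.2 hr'
      have hhh : (h : G) = (h' : G) := by
        rw [hrr] at heq
        exact mul_left_cancel heq
      exact Prod.ext (Subtype.ext hrr) (Subtype.ext hhh)
    · intro g
      obtain ⟨r, ⟨hrR, hrH⟩, -⟩ := S.hRrep g
      have hmem : r⁻¹ * g ∈ H := by
        have : r⁻¹ * g = (g⁻¹ * r)⁻¹ := by group
        rw [this]; exact inv_mem hrH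
      exact ⟨(⟨r, hrR⟩, ⟨r⁻¹ * g, hmem⟩), by simp⟩
  rw [Nat.card_eq_of_bijective _ hbij, Nat.card_eq_fintype_card]

lemma card_CanSet (S : Setup γ H R ar kap) (m : ℕ) (hn : 0 < m + 1) :
    Nat.card (CanSet (R := R) (H := H) hn) = Fintype.card G ^ m := by
  rw [Nat.card_congr (canEquiv S m hn), Nat.card_eq_fintype_card, Fintype.card_fun,
    Fintype.card_fin, ← Nat.card_eq_fintype_card (α := Xp R H), card_Xp S]

noncomputable instance canSetFintype {n : ℕ} (hn : 0 < n) :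
    Fintype (CanSet (R := R) (H := H) hn) := by
  unfold CanSet; infer_instance

/-- The canonical element of `CanSet` attached to a degree-`e` tuple. -/
def toCan (S : Setup γ H R ar kap) {n : ℕ} (hn : 0 < n) (y : Fin n → Xp R H)
    (hy : pparts (dRH R H) y n = 1) : CanSet (R := R) (H := H) hn :=
  ⟨Nmap harv hkapv hn y, Nmap_canon harv hkapv S hn y, by
    rw [Nmap_pparts harv hkapv S hn y]; exact hy⟩

lemma orbit_count (S : Setup γ H R ar kap) {n : ℕ} (hn : 0 < n) :
    Nat.card {O : Quot (tupleOrbRel (actRH R H ar kap harv hkapv) (n := n)) //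
        ∃ x : Fin n → Xp R H,
          Quot.mk (tupleOrbRel (actRH R H ar kap harv hkapv)) x = O ∧
          pparts (dRH R H) x n = 1} = Nat.card (CanSet (R := R) (H := H) hn) := by
  apply Nat.card_congr
  have resp : ∀ x y : Fin n → Xp R H, tupleOrbRel (actRH R H ar kap harv hkapv) x y →
      Nmap harv hkapv hn x = Nmap harv hkapv hn y := by
    rintro x y ⟨g, rfl⟩
    exact (Nmap_act harv hkapv S hn g x).symm
  refine
    { toFun := fun q => ⟨Quot.lift (Nmap harv hkapv hn) resp q.1, ?_⟩
      invFun := fun s => ⟨Quot.mk _ s.1, ⟨s.1, rfl, s.2.2⟩⟩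
      left_inv := ?_
      right_inv := ?_ }
  · obtain ⟨x, hx, hdeg⟩ := q.2
    rw [← hx]
    exact ⟨Nmap_canon harv hkapv S hn x, by rw [Nmap_pparts harv hkapv S hn x]; exact hdeg⟩
  · intro q
    apply Subtype.ext
    obtain ⟨x, hx, hdeg⟩ := q.2
    show Quot.mk _ (Quot.lift (Nmap harv hkapv hn) resp q.1) = q.1
    rw [← hx]
    exact (Quot.sound ⟨(((x ⟨0, hn⟩).1 : G))⁻¹, rfl⟩).symm
  · intro s
    apply Subtype.ext
    exact Nmap_fix harv hkapv S hn s.1 s.2.1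

lemma dim_inv (S : Setup γ H R ar kap) {n : ℕ} (hn : 0 < n) :
    Module.finrank ℂ
        (invSub (fun _ _ _ => (1 : ℂˣ)) (lamRH (fun _ _ _ => (1 : ℂˣ)) γ R H kap)
          (dRH R H) (actRH R H ar kap harv hkapv) n)
      = Nat.card (CanSet (R := R) (H := H) hn) := by
  have hmem : ∀ φ : (Fin n → Xp R H) → ℂ,
      φ ∈ invSub (fun _ _ _ => (1 : ℂˣ)) (lamRH (fun _ _ _ => (1 : ℂˣ)) γ R H kap)
          (dRH R H) (actRH R H ar kap harv hkapv) n ↔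
        ((∀ x : Fin n → Xp R H, pparts (dRH R H) x n ≠ 1 → φ x = 0) ∧
          ∀ g : G, rhoL (fun _ _ _ => (1 : ℂˣ)) (lamRH (fun _ _ _ => (1 : ℂˣ)) γ R H kap)
            (dRH R H) (actRH R H ar kap harv hkapv) g φ = φ) := by
    intro φ
    constructor
    · intro h
      obtain ⟨h1, h2⟩ := Submodule.mem_inf.mp h
      exact ⟨h1, fun g => LinearMap.mem_eqLocus.mp ((Submodule.mem_iInf _).mp h2 g)⟩
    · rintro ⟨h1, h2⟩
      exact Submodule.mem_inf.mpr
        ⟨h1, (Submodule.mem_iInf _).mpr fun g => LinearMap.mem_eqLocus.mpr (h2 g)⟩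
  let T : (invSub (fun _ _ _ => (1 : ℂˣ)) (lamRH (fun _ _ _ => (1 : ℂˣ)) γ R H kap)
        (dRH R H) (actRH R H ar kap harv hkapv) n) →ₗ[ℂ]
      ((CanSet (R := R) (H := H) hn) → ℂ) :=
    { toFun := fun φ s => (φ : (Fin n → Xp R H) → ℂ) s.1
      map_add' := fun φ ψ => rfl
      map_smul' := fun c φ => rfl }
  have hinj : Function.Injective T := by
    intro φ ψ hT
    apply Subtype.ext
    funext y
    obtain ⟨hφ1, hφ2⟩ := (hmem φ.1).mp φ.2
    obtain ⟨hψ1, hψ2⟩ := (hmem ψ.1).mp ψ.2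
    by_cases hd : pparts (dRH R H) y n = 1
    · rw [inv_val harv hkapv S hn φ.1 hφ2 y, inv_val harv hkapv S hn ψ.1 hψ2 y]
      have := congrFun hT (toCan harv hkapv S hn y hd)
      simp only [T] at this
      rw [show (φ : (Fin n → Xp R H) → ℂ) (Nmap harv hkapv hn y)
          = (ψ : (Fin n → Xp R H) → ℂ) (Nmap harv hkapv hn y) from this]
    · rw [hφ1 y hd, hψ1 y hd]
  have hsurj : Function.Surjective T := by
    intro ψ
    set φf : (Fin n → Xp R H) → ℂ := fun y =>
      if hy : pparts (dRH R H) y n = 1 then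
        (cF (γ := γ) harv hkapv hn y : ℂ) * ψ (toCan harv hkapv S hn y hy)
      else 0 with hφf
    have hφmem : φf ∈ invSub (fun _ _ _ => (1 : ℂˣ)) (lamRH (fun _ _ _ => (1 : ℂˣ)) γ R H kap)
        (dRH R H) (actRH R H ar kap harv hkapv) n := by
      refine (hmem φf).mpr ⟨fun x hx => dif_neg hx, fun g => ?_⟩
      funext y
      show (LamN (fun _ _ _ => (1 : ℂˣ)) (lamRH (fun _ _ _ => (1 : ℂˣ)) γ R H kap) (dRH R H)
          g (fun i => actRH R H ar kap harv hkapv g⁻¹ (y i)) : ℂ)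
          * φf (fun i => actRH R H ar kap harv hkapv g⁻¹ (y i)) = φf y
      have hdz : pparts (dRH R H) (fun i => actRH R H ar kap harv hkapv g⁻¹ (y i)) n
          = pparts (dRH R H) y n := S.pparts_act harv hkapv g⁻¹ y
      by_cases hy : pparts (dRH R H) y n = 1
      · have hz : pparts (dRH R H) (fun i => actRH R H ar kap harv hkapv g⁻¹ (y i)) n = 1 :=
          hdz.trans hy
        rw [hφf]
        simp only []
        rw [dif_pos hz, dif_pos hy]
        have hNzy : Nmap harv hkapv hn (fun i => actRH R H ar kap harv hkapv g⁻¹ (y i))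
            = Nmap harv hkapv hn y := Nmap_act harv hkapv S hn g⁻¹ y
        have hcan : toCan harv hkapv S hn (fun i => actRH R H ar kap harv hkapv g⁻¹ (y i)) hz
            = toCan harv hkapv S hn y hy := Subtype.ext hNzy
        rw [hcan]
        have hu := congrArg Units.val (cF_rel harv hkapv S hn g y hy)
        rw [Units.val_mul] at hu
        rw [← mul_assoc, hu]
      · have hz : ¬ pparts (dRH R H) (fun i => actRH R H ar kap harv hkapv g⁻¹ (y i)) n = 1 :=
          fun h => hy (hdz.symm.trans h)
        rw [hφf]
        simp only []
        rw [dif_neg hz, dif_neg hy, mul_zero]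
    refine ⟨⟨φf, hφmem⟩, ?_⟩
    funext s
    show φf s.1 = ψ s
    rw [hφf]
    simp only []
    rw [dif_pos s.2.2]
    have hcan : toCan harv hkapv S hn s.1 s.2.2 = s :=
      Subtype.ext (Nmap_fix harv hkapv S hn s.1 s.2.1)
    have hcf : cF (γ := γ) harv hkapv hn s.1 = 1 := by
      have h1 : cF (γ := γ) harv hkapv hn s.1
          = LamN (fun _ _ _ => (1 : ℂˣ)) (lamRH (fun _ _ _ => (1 : ℂˣ)) γ R H kap) (dRH R H)
            ((s.1 ⟨0, hn⟩).1 : G) (Nmap harv hkapv hn s.1) := rfl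
      rw [h1, s.2.1]
      exact S.LamN_one harv hkapv _
    rw [hcan, hcf]
    simp
  have e := LinearEquiv.ofBijective T ⟨hinj, hsurj⟩
  rw [e.finrank_eq, Module.finrank_fintype_fun_eq_card, Nat.card_eq_fintype_card]

end Canon

end Aux
end DW

open DW

/-- Let `G` be a finite group, `H ≤ Z(G)` a central subgroup
and `γ` a 2-cocycle on `H` (the associated 3-cocycle `ω` is trivial).  Then the
dimension of the space of `G`-invariant vectors of degree `e` in `L(H,γ)^{⊗n}`
(the ground-state space `Hom_{Z(Vec_G)}(ℂ, L(H,γ)^{⊗n})`) equals `|G|^{n-1}`.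
Equivalently, with `X = R×H` as a crossed `G`-set, every tuple in
`(X^n)_e = {((r_i,h_i))_i : h_1⋯h_n = e}` is regular, and the number of
`G`-orbits in `(X^n)_e` is `|G|^{n-1}`. -/
theorem ground_state_degeneracy_central {G : Type} [Group G] [Fintype G]
    (γ : G → G → ℂˣ) (H : Subgroup G) (hcen : H ≤ Subgroup.center G)
    (hγ : ∀ a b c : G, a ∈ H → b ∈ H → c ∈ H →
      γ (a * b) c * γ a b = γ a (b * c) * γ b c)
    (R : Set G) (hRrep : ∀ g : G, ∃! r : G, r ∈ R ∧ g⁻¹ * r ∈ H)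
    (heR : (1 : G) ∈ R)
    (ar kap : G → G → G)
    (har : ∀ g r : G, r ∈ R → ar g r ∈ R)
    (hkap : ∀ g r : G, r ∈ R → kap g r ∈ H)
    (hfact : ∀ g r : G, r ∈ R → g * r = ar g r * kap g r)
    (n : ℕ) (hn : 1 ≤ n) :
    Module.finrank ℂ
        (invSub (fun _ _ _ => (1 : ℂˣ)) (lamRH (fun _ _ _ => (1 : ℂˣ)) γ R H kap)
          (dRH R H) (actRH R H ar kap har hkap) n) =
      Fintype.card G ^ (n - 1) ∧
    (∀ x : Fin n → Xp R H, pparts (dRH R H) x n = 1 →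
      RegT (fun _ _ _ => (1 : ℂˣ)) (lamRH (fun _ _ _ => (1 : ℂˣ)) γ R H kap)
        (dRH R H) (actRH R H ar kap har hkap) x) ∧
    Nat.card {O : Quot (tupleOrbRel (actRH R H ar kap har hkap) (n := n)) //
        ∃ x : Fin n → Xp R H,
          Quot.mk (tupleOrbRel (actRH R H ar kap har hkap)) x = O ∧
          pparts (dRH R H) x n = 1} =
      Fintype.card G ^ (n - 1) := by
  have hS : DW.Setup γ H R ar kap := ⟨hcen, hγ, hRrep, heR, har, hkap, hfact⟩
  obtain ⟨m, rfl⟩ : ∃ m, n = m + 1 := ⟨n - 1, (Nat.succ_pred_eq_of_pos hn).symm⟩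
  have hn0 : 0 < m + 1 := Nat.succ_pos m
  have hmn : m + 1 - 1 = m := Nat.add_sub_cancel _ _
  refine ⟨?_, ?_, ?_⟩
  · rw [dim_inv har hkap hS hn0, card_CanSet hS m hn0, hmn]
  · intro x hdeg
    exact hS.regular har hkap hn0 x hdeg
  · rw [orbit_count har hkap hS hn0, card_CanSet hS m hn0, hmn]
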